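/- Suppose an algorithm achieves regret at most c₁·log|J| + c₂ + c₃·√(∑_{t∈J} ‖g_t‖) on every geometric-covering interval J, where g_t are per-round gradient vectors. Then on any interval I of positive integers, decomposing I into the GC-interval sequences of the previous lemma and summing, the total regret on I is at most O(c₁·log²|I| + (c₂ + c₃·√(∑_{t∈I}‖g_t‖))·log|I|). -/

import Mathlib

private lemma aux18 (Reg : ℕ → ℕ → ℝ) (X : ℝ) (hX : 0 ≤ X) (a₀ b₀ : ℕ)
    (hpiece : ∀ k i : ℕ, 1 ≤ i → a₀ ≤ 2 ^ k * i → 2 ^ k * (i + 1) - 1 ≤ b₀ →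
      Reg (2 ^ k * i) (2 ^ k * (i + 1) - 1) ≤ X)
    (hsup : ∀ a b c : ℕ, a ≤ b → b < c → Reg a c ≤ Reg a b + Reg (b + 1) c) :
    ∀ n a b : ℕ, 1 ≤ a → a ≤ b → a₀ ≤ a → b ≤ b₀ → b + 1 = a + n →
      Reg a b ≤ ((Nat.log 2 n + 1 - min (padicValNat 2 a) (Nat.log 2 n + 1)
        + (Nat.log 2 n + 1) : ℕ) : ℝ) * X := by
  intro n
  induction n using Nat.strong_induction_on with
  | _ n ih =>
    intro a b ha hab ha₀ hb₀ hn
    have hn1 : 1 ≤ n := by omega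
    set L := Nat.log 2 n with hL
    set v := padicValNat 2 a with hv
    set k := min v L with hk
    have h2v : (2:ℕ) ^ v ∣ a := pow_padicValNat_dvd
    have h2k : (2:ℕ) ^ k ∣ a := (pow_dvd_pow 2 (min_le_left _ _)).trans h2v
    have h2kn : 2 ^ k ≤ n :=
      le_trans (Nat.pow_le_pow_right (by norm_num) (min_le_right _ _))
        (Nat.pow_log_le_self 2 (by omega))
    have h2ka : 2 ^ k ≤ a := Nat.le_of_dvd (by omega) h2k
    set i := a / 2 ^ k with hi
    have hia : 2 ^ k * i = a := Nat.mul_div_cancel' h2k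
    have hi1 : 1 ≤ i := by
      rw [Nat.one_le_div_iff (Nat.two_pow_pos k)]; exact h2ka
    have hEnd : 2 ^ k * (i + 1) = a + 2 ^ k := by
      rw [Nat.mul_add, hia, mul_one]
    have h2kpos : 0 < 2 ^ k := Nat.two_pow_pos k
    by_cases hcase : 2 ^ k = n
    · -- single piece covers [a,b]
      have hb : b = 2 ^ k * (i + 1) - 1 := by omega
      have h1 : Reg a b ≤ X := by
        rw [show a = 2 ^ k * i from hia.symm, hb]
        exact hpiece k i hi1 (by omega) (by omega)
      have h2 : 1 ≤ L + 1 - min v (L + 1) + (L + 1) := by omega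
      refine h1.trans (le_mul_of_one_le_left hX ?_)
      exact_mod_cast h2
    · have h2kn' : 2 ^ k < n := lt_of_le_of_ne h2kn hcase
      set n' := n - 2 ^ k with hn'
      have hsplit := hsup a (a + 2 ^ k - 1) b (by omega) (by omega)
      have hstep : a + 2 ^ k - 1 + 1 = a + 2 ^ k := by omega
      rw [hstep] at hsplit
      have hp : Reg a (a + 2 ^ k - 1) ≤ X := by
        have h := hpiece k i hi1 (by omega) (by omega)
        rw [hia, show 2 ^ k * (i + 1) - 1 = a + 2 ^ k - 1 by omega] at h
        exact h
      have hrec := ih n' (by omega) (a + 2 ^ k) b (by omega) (by omega) (by omega) hb₀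
        (by omega)
      set L' := Nat.log 2 n' with hL'
      set v' := padicValNat 2 (a + 2 ^ k) with hv'
      have hL'L : L' ≤ L := Nat.log_mono_right (by omega)
      have hkey : L' + 1 - min v' (L' + 1) + (L' + 1) + 1
          ≤ L + 1 - min v (L + 1) + (L + 1) := by
        by_cases hvL : v ≤ L
        · -- ascending: k = v, 2^(v+1) ∣ a + 2^k
          have hkv : k = v := min_eq_left hvL
          have hdvd : (2:ℕ) ^ (v + 1) ∣ a + 2 ^ k := by
            have hodd : ¬ (2:ℕ) ^ (v + 1) ∣ a :=
              pow_succ_padicValNat_not_dvd (p := 2) (by omega)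
            obtain ⟨m, hm⟩ := h2v
            have hmodd : ¬ 2 ∣ m := by
              rintro ⟨c, hc⟩; exact hodd ⟨c, by rw [hm, hc]; ring⟩
            obtain ⟨c, hc⟩ : 2 ∣ m + 1 := by omega
            refine ⟨c, ?_⟩
            rw [hkv, hm, show (2:ℕ) ^ v * m + 2 ^ v = 2 ^ v * (m + 1) by ring, hc,
              pow_succ]
            ring
          have hv'ge : v + 1 ≤ v' :=
            (padicValNat_dvd_iff_le (p := 2) (by omega)).mp hdvd
          omega
        · -- descending: k = L, n' < 2^L, L' < L, 2^(L'+1) ∣ a + 2^k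
          have hkL : k = L := min_eq_right (by omega)
          have hnlt : n < 2 ^ (L + 1) := Nat.lt_pow_succ_log_self (by norm_num) n
          have hpow : (2:ℕ) ^ (L + 1) = 2 ^ L * 2 := pow_succ 2 L
          have h2kL : (2:ℕ) ^ k = 2 ^ L := by rw [hkL]
          have hn'lt : n' < 2 ^ L := by omega
          have hL'lt : L' < L := Nat.log_lt_of_lt_pow (by omega) hn'lt
          have hdvd : (2:ℕ) ^ (L' + 1) ∣ a + 2 ^ k := by
            have h2 : (2:ℕ) ^ k ∣ a + 2 ^ k := dvd_add h2k dvd_rfl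
            exact (pow_dvd_pow 2 (by omega)).trans h2
          have hv'ge : L' + 1 ≤ v' :=
            (padicValNat_dvd_iff_le (p := 2) (by omega)).mp hdvd
          omega
      calc Reg a b ≤ Reg a (a + 2 ^ k - 1) + Reg (a + 2 ^ k) b := hsplit
        _ ≤ X + ((L' + 1 - min v' (L' + 1) + (L' + 1) : ℕ) : ℝ) * X :=
            add_le_add hp hrec
        _ = ((L' + 1 - min v' (L' + 1) + (L' + 1) + 1 : ℕ) : ℝ) * X := by
            push_cast; ring
        _ ≤ _ := mul_le_mul_of_nonneg_right (by exact_mod_cast hkey) hX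

/-- From a regret bound `c₁ log|J| + c₂ + c₃ √(∑_{t∈J} g_t)` on every geometric-covering
interval `J`, superadditivity over consecutive intervals yields, on any interval `[a,b]`,
regret `O(c₁ log²|I| + (c₂ + c₃ √(∑_{t∈I} g_t)) log|I|)` (with `1 + log` factors). -/
theorem stmt18 :
    ∃ Cabs : ℝ, 0 < Cabs ∧
      ∀ (Reg : ℕ → ℕ → ℝ) (gn : ℕ → ℝ) (c₁ c₂ c₃ : ℝ),
        0 ≤ c₁ → 0 ≤ c₂ → 0 ≤ c₃ → (∀ t, 0 ≤ gn t) →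
        (∀ a b c : ℕ, a ≤ b → b < c → Reg a c ≤ Reg a b + Reg (b + 1) c) →
        (∀ k i : ℕ, 1 ≤ i →
          Reg (2 ^ k * i) (2 ^ k * (i + 1) - 1)
            ≤ c₁ * Real.log ((2 : ℝ) ^ k) + c₂
              + c₃ * Real.sqrt (∑ t ∈ Finset.Icc (2 ^ k * i) (2 ^ k * (i + 1) - 1), gn t)) →
        ∀ a b : ℕ, 1 ≤ a → a ≤ b →
          Reg a b ≤ Cabs * (c₁ * (1 + Real.log ((b : ℝ) - (a : ℝ) + 1)) ^ 2
            + (c₂ + c₃ * Real.sqrt (∑ t ∈ Finset.Icc a b, gn t))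
              * (1 + Real.log ((b : ℝ) - (a : ℝ) + 1))) := by
  refine ⟨3, by norm_num, ?_⟩
  intro Reg gn c₁ c₂ c₃ hc₁ hc₂ hc₃ hg hsup hgc a b ha hab
  set N := b - a + 1 with hN
  have hN1 : 1 ≤ N := by omega
  have hNcast : ((N : ℕ) : ℝ) = (b : ℝ) - (a : ℝ) + 1 := by
    rw [hN]; push_cast [Nat.cast_sub hab]; ring
  set S := ∑ t ∈ Finset.Icc a b, gn t with hS
  have hS0 : 0 ≤ S := Finset.sum_nonneg fun t _ => hg t
  have hsq0 : 0 ≤ Real.sqrt S := Real.sqrt_nonneg S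
  have hlogN0 : 0 ≤ Real.log (N : ℝ) := Real.log_nonneg (by exact_mod_cast hN1)
  set X := c₁ * Real.log (N : ℝ) + c₂ + c₃ * Real.sqrt S with hX
  have hX0 : 0 ≤ X := by positivity
  have hpiece : ∀ k i : ℕ, 1 ≤ i → a ≤ 2 ^ k * i → 2 ^ k * (i + 1) - 1 ≤ b →
      Reg (2 ^ k * i) (2 ^ k * (i + 1) - 1) ≤ X := by
    intro k i hi h1 h2
    refine (hgc k i hi).trans ?_
    have hmul : 2 ^ k * (i + 1) = 2 ^ k * i + 2 ^ k := by ring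
    have h2kpos : 0 < 2 ^ k := Nat.two_pow_pos k
    have h2kN : 2 ^ k ≤ N := by omega
    have hlog : Real.log ((2 : ℝ) ^ k) ≤ Real.log (N : ℝ) := by
      apply Real.log_le_log (by positivity)
      exact_mod_cast h2kN
    have hsum : ∑ t ∈ Finset.Icc (2 ^ k * i) (2 ^ k * (i + 1) - 1), gn t ≤ S := by
      apply Finset.sum_le_sum_of_subset_of_nonneg
      · exact Finset.Icc_subset_Icc h1 h2
      · intro t _ _; exact hg t
    have hsqrt : Real.sqrt (∑ t ∈ Finset.Icc (2 ^ k * i) (2 ^ k * (i + 1) - 1), gn t)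
        ≤ Real.sqrt S := Real.sqrt_le_sqrt hsum
    rw [hX]
    gcongr
  have key := aux18 Reg X hX0 a b hpiece hsup N a b ha hab le_rfl le_rfl (by omega)
  set L := Nat.log 2 N with hL
  set v := padicValNat 2 a with hv
  have hgcount : (L + 1 - min v (L + 1) + (L + 1) : ℕ) ≤ 2 * L + 2 := by omega
  have hL0 : (0 : ℝ) ≤ (L : ℝ) := Nat.cast_nonneg L
  have hLlog : (L : ℝ) * Real.log 2 ≤ Real.log (N : ℝ) := by
    have h := Real.natLog_le_logb N 2
    rw [Real.logb] at h
    have hlog2pos : (0 : ℝ) < Real.log 2 := Real.log_pos (by norm_num)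
    calc (L : ℝ) * Real.log 2 ≤ (Real.log (N : ℝ) / Real.log 2) * Real.log 2 := by
          apply mul_le_mul_of_nonneg_right _ hlog2pos.le
          exact_mod_cast h
      _ = Real.log (N : ℝ) := div_mul_cancel₀ _ hlog2pos.ne'
  have hlog2 : (0.6931471803 : ℝ) < Real.log 2 := Real.log_two_gt_d9
  have hcount : ((2 * L + 2 : ℕ) : ℝ) ≤ 3 * (1 + Real.log (N : ℝ)) := by
    have hc : ((2 * L + 2 : ℕ) : ℝ) = 2 * (L : ℝ) + 2 := by push_cast; ring
    rw [hc]
    nlinarith [mul_nonneg hL0 (sub_nonneg.mpr hlog2.le)]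
  have hXbound : X ≤ c₁ * (1 + Real.log (N : ℝ)) + (c₂ + c₃ * Real.sqrt S) := by
    rw [hX]
    have : c₁ * Real.log (N : ℝ) ≤ c₁ * (1 + Real.log (N : ℝ)) := by nlinarith
    linarith
  have h1plog : (0 : ℝ) ≤ 1 + Real.log (N : ℝ) := by linarith
  have hfinal : Reg a b ≤ 3 * (1 + Real.log (N : ℝ)) *
      (c₁ * (1 + Real.log (N : ℝ)) + (c₂ + c₃ * Real.sqrt S)) := by
    calc Reg a b ≤ ((L + 1 - min v (L + 1) + (L + 1) : ℕ) : ℝ) * X := key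
      _ ≤ ((2 * L + 2 : ℕ) : ℝ) * X := by
          apply mul_le_mul_of_nonneg_right _ hX0
          exact_mod_cast hgcount
      _ ≤ (3 * (1 + Real.log (N : ℝ))) * X := mul_le_mul_of_nonneg_right hcount hX0
      _ ≤ _ := by
          apply mul_le_mul_of_nonneg_left hXbound (by linarith)
  rw [← hNcast]
  calc Reg a b ≤ 3 * (1 + Real.log (N : ℝ)) *
      (c₁ * (1 + Real.log (N : ℝ)) + (c₂ + c₃ * Real.sqrt S)) := hfinal
    _ = 3 * (c₁ * (1 + Real.log (N : ℝ)) ^ 2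
        + (c₂ + c₃ * Real.sqrt S) * (1 + Real.log (N : ℝ))) := by ring
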